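/- Let q be a prime power, m a positive integer, θ : F_{q^m} → M_m(F_q) an injective F_q-algebra homomorphism, and γ a primitive element of F_{q^m} (an element of multiplicative order q^m−1). Let a and b be nonnegative integers such that a·q^e ≢ b·q^h (mod q^m−1) for all e, h ∈ {0, 1, …, m−1}. Then the m²×m² matrix θ(γ^{−b}) ⊗ θ(γ^{a}) − I_{m²} over F_q is invertible (equivalently, 1 is not an eigenvalue of θ(γ^{−b}) ⊗ θ(γ^{a})). -/

import Mathlib

open Matrix Kronecker Polynomial

-- semiconjugation extends to polynomials
lemma semiconj_aeval' {R A : Type*} [CommRing R] [Ring A] [Algebra R A]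
    (x c d : A) (h : x * c = d * x) (P : R[X]) :
    x * aeval c P = aeval d P * x := by
  induction P using Polynomial.induction_on' with
  | add p q hp hq => simp [map_add, mul_add, add_mul, hp, hq]
  | monomial n r =>
      have hpow : x * c ^ n = d ^ n * x := (SemiconjBy.pow_right h n :)
      simp only [aeval_monomial]
      rw [← mul_assoc, ← Algebra.commutes r x, mul_assoc, hpow, ← mul_assoc]

lemma aeval_transpose' {R n : Type*} [CommRing R] [Fintype n] [DecidableEq n]
    (M : Matrix n n R) (P : R[X]) :
    aeval Mᵀ P = (aeval M P)ᵀ := by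
  induction P using Polynomial.induction_on' with
  | add p q hp hq => simp [map_add, hp, hq]
  | monomial k r =>
      simp [aeval_monomial, Matrix.transpose_mul, Matrix.transpose_pow,
        Algebra.algebraMap_eq_smul_one, Matrix.transpose_smul, smul_mul_assoc,
        mul_smul_comm, Matrix.transpose_one]

lemma mem_range_of_pow_card_eq {F E : Type*} [Field F] [Field E] [Fintype F] [Fintype E]
    [Algebra F E] {q : ℕ} (hq2 : 2 ≤ q) (hF : Fintype.card F = q)
    (c : E) (hc : c ^ q = c) : c ∈ Set.range (algebraMap F E) := by
  classical
  set P : E[X] := X ^ q - X with hP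
  have hdeg : P.natDegree = q := by
    have h1 : (X : E[X]).natDegree < (X ^ q : E[X]).natDegree := by
      simp only [natDegree_X, natDegree_X_pow]; omega
    rw [hP, natDegree_sub_eq_left_of_natDegree_lt h1, natDegree_X_pow]
  have hP0 : P ≠ 0 := by
    intro h
    rw [h] at hdeg
    simp at hdeg
    omega
  have hroot : ∀ x : E, x ^ q = x → x ∈ P.roots.toFinset := by
    intro x hx
    simp [hP0, Multiset.mem_toFinset, mem_roots, hP, sub_eq_zero, hx]
    intro h
    rw [hP, h, sub_self] at hP0
    exact hP0 rfl
  have hFsub : (Finset.univ.image (algebraMap F E)) ⊆ P.roots.toFinset := by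
    intro y hy
    obtain ⟨x, _, rfl⟩ := Finset.mem_image.mp hy
    apply hroot
    rw [← map_pow, ← hF, FiniteField.pow_card]
  have hcardF : (Finset.univ.image (algebraMap F E)).card = q := by
    rw [Finset.card_image_of_injective _ (algebraMap F E).injective, Finset.card_univ, hF]
  have hcardR : P.roots.toFinset.card ≤ q := by
    calc P.roots.toFinset.card ≤ Multiset.card P.roots := P.roots.toFinset_card_le
    _ ≤ P.natDegree := P.card_roots'
    _ = q := hdeg
  have heq : P.roots.toFinset = Finset.univ.image (algebraMap F E) :=
    (Finset.eq_of_subset_of_card_le hFsub (hcardF ▸ hcardR)).symm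
  have := hroot c hc
  rw [heq, Finset.mem_image] at this
  obtain ⟨x, _, hx⟩ := this
  exact ⟨x, hx⟩

lemma root_minpoly_is_conj {F E : Type*} [Field F] [Field E] [Fintype F] [Fintype E]
    [Algebra F E] {q m p k : ℕ} (hp : p.Prime) (hk : 0 < k) (hpk : p ^ k = q)
    (hF : Fintype.card F = q) (hE : Fintype.card E = q ^ m) (hm : 0 < m)
    (α β : E) (hroot : aeval β (minpoly F α) = 0) :
    ∃ h < m, β = α ^ q ^ h := by
  classical
  have hq2 : 2 ≤ q := by
    subst hpk; calc 2 ≤ p := hp.two_le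
    _ = p ^ 1 := (pow_one p).symm
    _ ≤ p ^ k := Nat.pow_le_pow_right hp.pos hk
  -- characteristic of E is p
  have hcharE : CharP E p := by
    have h1 : (Fintype.card E : E) = 0 := by
      exact_mod_cast Nat.cast_card_eq_zero E
    have h2 : ringChar E ∣ Fintype.card E := ringChar.dvd h1
    rw [hE, ← hpk, ← pow_mul] at h2
    have hprime : (ringChar E).Prime := by
      have : CharP E (ringChar E) := ringChar.charP E
      exact (CharP.char_is_prime_or_zero E (ringChar E)).resolve_right (by
        intro h0
        have := CharP.ringChar_ne_zero_of_finite E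
        exact this h0)
    have := (Nat.prime_dvd_prime_iff_eq hprime hp).mp (hprime.dvd_of_dvd_pow h2)
    rw [← this]
    exact ringChar.charP E
  haveI := hcharE
  haveI : ExpChar E p := ExpChar.prime hp
  set φ := iterateFrobenius E p k with hφdef
  have hφ : ∀ x : E, φ x = x ^ q := fun x => by
    rw [hφdef, iterateFrobenius_def, hpk]
  -- every element of E satisfies x ^ q ^ m = x
  have hEpow : ∀ x : E, x ^ q ^ m = x := fun x => by
    rw [← hE, FiniteField.pow_card]
  set g : E[X] := ∏ h ∈ Finset.range m, (X - C (α ^ q ^ h)) with hg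
  -- g is fixed by φ
  have hmap : g.map φ = g := by
    rw [hg, Polynomial.map_prod]
    have hfac : ∀ h : ℕ, (X - C (α ^ q ^ h)).map φ = X - C (α ^ q ^ (h + 1)) := by
      intro h
      rw [Polynomial.map_sub, Polynomial.map_X, Polynomial.map_C, hφ, ← pow_mul,
        ← pow_succ]
    simp only [hfac]
    set f : ℕ → E[X] := fun h => X - C (α ^ q ^ h) with hf
    have hfm : f m = f 0 := by
      simp only [hf, pow_zero, pow_one, hEpow α]
    have key : (∏ h ∈ Finset.range m, f (h + 1)) * f 0
        = (∏ h ∈ Finset.range m, f h) * f 0 := by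
      calc (∏ h ∈ Finset.range m, f (h + 1)) * f 0
          = ∏ h ∈ Finset.range (m + 1), f h := (Finset.prod_range_succ' f m).symm
        _ = (∏ h ∈ Finset.range m, f h) * f m := Finset.prod_range_succ f m
        _ = (∏ h ∈ Finset.range m, f h) * f 0 := by rw [hfm]
    have hf0 : f 0 ≠ 0 := X_sub_C_ne_zero _
    exact mul_right_cancel₀ hf0 key
  -- coefficients of g lie in the image of F
  have hcoeff : ∀ n : ℕ, g.coeff n ∈ Set.range (algebraMap F E) := by
    intro n
    apply mem_range_of_pow_card_eq hq2 hF
    have := congrArg (fun P => Polynomial.coeff P n) hmap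
    simpa [Polynomial.coeff_map, hφ] using this
  obtain ⟨g₀, hg₀⟩ : ∃ g₀ : F[X], g₀.map (algebraMap F E) = g :=
    (Polynomial.mem_lifts _).mp ((Polynomial.lifts_iff_coeff_lifts _).mpr hcoeff)
  -- α is a root of g₀, so minpoly divides g₀
  have hαg : aeval α g₀ = 0 := by
    rw [aeval_def, ← Polynomial.eval_map, hg₀, hg, Polynomial.eval_prod]
    apply Finset.prod_eq_zero (Finset.mem_range.mpr hm)
    simp
  have hdvd : minpoly F α ∣ g₀ := minpoly.dvd F α hαg
  -- hence β is a root of g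
  obtain ⟨r, hr⟩ := hdvd
  have hβg : Polynomial.eval β g = 0 := by
    rw [← hg₀, Polynomial.eval_map, ← aeval_def, hr, _root_.map_mul, hroot, zero_mul]
  rw [hg, Polynomial.eval_prod, Finset.prod_eq_zero_iff] at hβg
  obtain ⟨h, hh, hfac⟩ := hβg
  refine ⟨h, Finset.mem_range.mp hh, ?_⟩
  simpa [sub_eq_zero] using hfac

theorem stmt11 (q m : ℕ) (hq : IsPrimePow q) (hm : 0 < m)
    (F E : Type*) [Field F] [Field E] [Fintype F] [Fintype E] [Algebra F E]
    (hF : Fintype.card F = q) (hE : Fintype.card E = q ^ m)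
    (θ : E →ₐ[F] Matrix (Fin m) (Fin m) F) (hθ : Function.Injective θ)
    (γ : E) (hγ : orderOf γ = q ^ m - 1)
    (a b : ℕ)
    (hab : ∀ e h : ℕ, e < m → h < m →
      ¬ (a * q ^ e ≡ b * q ^ h [MOD q ^ m - 1])) :
    IsUnit (θ (γ⁻¹ ^ b) ⊗ₖ θ (γ ^ a) - 1) := by
  classical
  obtain ⟨p, k, hp, hk, hpk⟩ := hq
  have hq2 : 2 ≤ q := by
    rw [← hpk]
    calc 2 ≤ p := (Nat.prime_iff.mpr hp).two_le
    _ = p ^ 1 := (pow_one p).symm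
    _ ≤ p ^ k := Nat.pow_le_pow_right (Nat.prime_iff.mpr hp).pos hk
  have hQ1 : 1 < q ^ m := Nat.one_lt_pow hm.ne' (by omega)
  have hγ1 : γ ^ (q ^ m - 1) = 1 := by rw [← hγ]; exact pow_orderOf_eq_one γ
  have hγ0 : γ ≠ 0 := by
    intro h
    rw [h, zero_pow (by omega)] at hγ1
    exact zero_ne_one hγ1
  set A := θ (γ⁻¹ ^ b) with hA
  set B := θ (γ ^ a) with hB
  by_contra hM
  have hdet : (A ⊗ₖ B - 1).det = 0 := by
    by_contra hd
    exact hM ((Matrix.isUnit_iff_isUnit_det _).mpr (isUnit_iff_ne_zero.mpr hd))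
  obtain ⟨v, hv0, hv⟩ := Matrix.exists_mulVec_eq_zero_iff.mpr hdet
  have hKv : (A ⊗ₖ B) *ᵥ v = v := by
    rw [Matrix.sub_mulVec, Matrix.one_mulVec, sub_eq_zero] at hv
    exact hv
  set X : Matrix (Fin m) (Fin m) F := Matrix.of fun i j => v (i, j) with hXdef
  have hXne : X ≠ 0 := by
    intro h
    apply hv0
    funext pr
    have := congrFun (congrFun h pr.1) pr.2
    simpa [hXdef] using this
  have hX : A * X * Bᵀ = X := by
    ext i j
    have hthis := congrFun hKv (i, j)
    simp only [Matrix.mulVec, dotProduct, Fintype.sum_prod_type,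
      Matrix.kroneckerMap_apply] at hthis
    simp only [Matrix.mul_apply, Matrix.transpose_apply, Finset.sum_mul]
    rw [Finset.sum_comm]
    have : X i j = v (i, j) := rfl
    rw [this, ← hthis]
    refine Finset.sum_congr rfl fun kk _ => Finset.sum_congr rfl fun l _ => ?_
    have : X kk l = v (kk, l) := rfl
    rw [this]
    ring
  have hγb : γ ^ b * γ⁻¹ ^ b = 1 := by
    rw [inv_pow, mul_inv_cancel₀ (pow_ne_zero b hγ0)]
  set D := θ (γ ^ b) with hD
  have hDA : D * A = 1 := by
    rw [hD, hA, ← _root_.map_mul, hγb]; exact θ.map_one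
  have hsc : X * Bᵀ = D * X := by
    calc X * Bᵀ = 1 * (X * Bᵀ) := (one_mul _).symm
    _ = D * A * (X * Bᵀ) := by rw [hDA]
    _ = D * (A * X * Bᵀ) := by rw [mul_assoc D A _, ← mul_assoc A X Bᵀ]
    _ = D * X := by rw [hX]
  set P := minpoly F (γ ^ a) with hP
  have key : X * Polynomial.aeval Bᵀ P = Polynomial.aeval D P * X :=
    semiconj_aeval' X Bᵀ D hsc P
  have hBP : Polynomial.aeval B P = 0 := by
    rw [hB, Polynomial.aeval_algHom_apply, hP, minpoly.aeval, map_zero]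
  have hBtP : Polynomial.aeval Bᵀ P = 0 := by
    rw [aeval_transpose', hBP, Matrix.transpose_zero]
  have hDPX : θ (Polynomial.aeval (γ ^ b) P) * X = 0 := by
    rw [← Polynomial.aeval_algHom_apply, ← hD, ← key, hBtP, mul_zero]
  have hroot : Polynomial.aeval (γ ^ b) P = 0 := by
    by_contra hne
    have hu : IsUnit (θ (Polynomial.aeval (γ ^ b) P)) :=
      (isUnit_iff_ne_zero.mpr hne).map θ
    exact hXne (hu.mul_left_cancel (by rw [hDPX, mul_zero]))
  obtain ⟨h, hh, hβ⟩ := root_minpoly_is_conj (Nat.prime_iff.mpr hp) hk hpk hF hE hm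
    (γ ^ a) (γ ^ b) hroot
  rw [← pow_mul] at hβ
  obtain ⟨u, rfl⟩ := isUnit_iff_ne_zero.mpr hγ0
  have hupow : u ^ b = u ^ (a * q ^ h) := by
    ext
    exact_mod_cast hβ
  have hmod : b ≡ a * q ^ h [MOD q ^ m - 1] := by
    have hmm := pow_eq_pow_iff_modEq.mp hupow
    rwa [← orderOf_units, hγ] at hmm
  exact hab h 0 hh hm (by simpa using hmod.symm)
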